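/- arXiv:1701.02109 — 2 statements merged into one kernel-verified Lean document; each statement's English description precedes it below -/
import Mathlib

section
/- The atoms of the lattice (PE_n, ≤_dref) are exactly the partitions a_{i,j} with unique non-singleton block {i,j} for 1 ≤ i < j ≤ n, excluding a_{1,n-1} and a_{n-1,n}. -/
/-- A set partition of `[n]` (as a setoid on `Fin n`) is noncrossing. -/
def IsNoncrossing {n : ℕ} (x : Setoid (Fin n)) : Prop :=
  ∀ i j k l : Fin n, i < j → j < k → k < l → x.r i k → x.r j l → x.r i j

/-- `B` is a block of the set partition `x`. -/
def IsBlock {n : ℕ} (x : Setoid (Fin n)) (B : Set (Fin n)) : Prop :=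
  ∃ a, B = {b | x.r a b}

/-- The set partition whose unique (possibly) non-singleton block is `S`. -/
def blockSetoid {n : ℕ} (S : Set (Fin n)) : Setoid (Fin n) where
  r a b := a = b ∨ (a ∈ S ∧ b ∈ S)
  iseqv := by
    refine ⟨fun _ => Or.inl rfl, ?_, ?_⟩
    · rintro a b (rfl | ⟨h1, h2⟩)
      · exact Or.inl rfl
      · exact Or.inr ⟨h2, h1⟩
    · rintro a b c (rfl | ⟨h1, h2⟩) h
      · exact h
      · rcases h with rfl | ⟨h3, h4⟩
        · exact Or.inr ⟨h1, h2⟩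
        · exact Or.inr ⟨h1, h4⟩

/-- The element `x_i` of the left-modular chain: its unique non-singleton block is
`[i-1] ∪ {n}` (in 1-based terms), i.e. the elements with value `< i-1` or value `n-1`. -/
def xChain (n i : ℕ) : Setoid (Fin n) :=
  blockSetoid {a : Fin n | a.val + 1 < i ∨ a.val = n - 1}

/-- The noncrossing closure: the smallest noncrossing partition above `x`. -/
def ncClosure {n : ℕ} (x : Setoid (Fin n)) : Setoid (Fin n) :=
  sInf {y | IsNoncrossing y ∧ x ≤ y}

/-- The join of two noncrossing partitions in `NC_n`. -/
def joinNC {n : ℕ} (x y : Setoid (Fin n)) : Setoid (Fin n) :=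
  ncClosure (x ⊔ y)

/-- The join of a set of noncrossing partitions in `NC_n`. -/
def joinSetNC {n : ℕ} (X : Set (Setoid (Fin n))) : Setoid (Fin n) :=
  ncClosure (sSup X)

/-- Membership in `PE_n`: noncrossing, `{n-1, n}` is not a block, and it is not the case
that `{n}` is a singleton block while `1 ∼ n-1`. -/
def PEmem {n : ℕ} (x : Setoid (Fin n)) : Prop :=
  IsNoncrossing x ∧
  ¬ IsBlock x {a : Fin n | a.val = n - 2 ∨ a.val = n - 1} ∧
  ¬ (IsBlock x {a : Fin n | a.val = n - 1} ∧
      ∃ a b : Fin n, a.val = 0 ∧ b.val = n - 2 ∧ x.r a b)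

/-- `m` is the meet of `x` and `y` in the poset `PE_n`. -/
def IsMeetPE {n : ℕ} (x y m : Setoid (Fin n)) : Prop :=
  PEmem m ∧ m ≤ x ∧ m ≤ y ∧ ∀ z, PEmem z → z ≤ x → z ≤ y → z ≤ m

/-- `j` is the join of `x` and `y` in the poset `PE_n`. -/
def IsJoinPE {n : ℕ} (x y j : Setoid (Fin n)) : Prop :=
  PEmem j ∧ x ≤ j ∧ y ≤ j ∧ ∀ z, PEmem z → x ≤ z → y ≤ z → j ≤ z

/-- `x ⋖ y` in `PE_n`. -/
def CovPE {n : ℕ} (x y : Setoid (Fin n)) : Prop :=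
  PEmem x ∧ PEmem y ∧ x < y ∧ ∀ z, PEmem z → x < z → ¬ z < y

/-- The atoms of `NC_n`: partitions `a_{i,j}` with unique non-singleton block `{i, j}`. -/
def IsAtomNC {n : ℕ} (a : Setoid (Fin n)) : Prop :=
  ∃ i j : Fin n, i < j ∧ a = blockSetoid {i, j}

/-- The partial order `≼` on atoms of `NC_n` induced by the classes
`A_j = {a : a ≤ x_j and a ≰ x_{j-1}}`. -/
def atomPrec {n : ℕ} (a b : Setoid (Fin n)) : Prop :=
  ∃ i j : ℕ, 1 ≤ i ∧ i < j ∧ j ≤ n - 1 ∧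
    (a ≤ xChain n i ∧ ¬ a ≤ xChain n (i - 1)) ∧
    (b ≤ xChain n j ∧ ¬ b ≤ xChain n (j - 1))

/-- A set of atoms of `NC_n` is bounded below (BB). -/
def IsBBset {n : ℕ} (X : Set (Setoid (Fin n))) : Prop :=
  ∀ d ∈ X, ∃ a, IsAtomNC a ∧ atomPrec a d ∧ a < joinSetNC X

/-- A set of atoms of `NC_n` is NBB: no nonempty subset is bounded below. -/
def IsNBBset {n : ℕ} (X : Set (Setoid (Fin n))) : Prop :=
  ∀ Y ⊆ X, Y.Nonempty → ¬ IsBBset Y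

/-- `X` is an NBB base for the top element of `NC_n`. -/
def IsNBBBaseTop {n : ℕ} (X : Set (Setoid (Fin n))) : Prop :=
  (∀ a ∈ X, IsAtomNC a) ∧ IsNBBset X ∧ joinSetNC X = ⊤

/-- The graph `τ(X)` on vertex set `[n]` associated with a set `X` of atoms:
`i` and `j` are adjacent iff `a_{i,j} ∈ X`. -/
def atomGraph {n : ℕ} (X : Set (Setoid (Fin n))) : SimpleGraph (Fin n) where
  Adj i j := i ≠ j ∧ blockSetoid ({i, j} : Set (Fin n)) ∈ X
  symm := by
    constructor
    rintro i j ⟨hne, hm⟩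
    exact ⟨hne.symm, by rwa [Set.pair_comm]⟩
  loopless := ⟨fun i h => h.1 rfl⟩

/-- The parking label of the cover `x ⋖ y` is `p`: `y` merges blocks `B₁, B₂` of `x` with
`min B₁ < min B₂`, and `p = max { j ∈ B₁ : j ≤ i for all i ∈ B₂ }`. -/
def ParkingLabelIs {n : ℕ} (x y : Setoid (Fin n)) (p : Fin n) : Prop :=
  ∃ B₁ B₂ : Set (Fin n), IsBlock x B₁ ∧ IsBlock x B₂ ∧ B₁ ≠ B₂ ∧
    IsBlock y (B₁ ∪ B₂) ∧
    (∃ a ∈ B₁, ∀ b ∈ B₂, a < b) ∧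
    p ∈ B₁ ∧ (∀ i ∈ B₂, p ≤ i) ∧ (∀ j ∈ B₁, (∀ i ∈ B₂, j ≤ i) → j ≤ p)

/-- The label of the cover `w ⋖ z` in the `S_n` EL-labeling of `PE_n` coming from the
left-modular chain: `λ(w,z) = min { i-1 : x_i ≰ w and x_i ≤ z }`. -/
def LabelIs (n : ℕ) (w z : Setoid (Fin n)) (v : ℕ) : Prop :=
  ∃ i : ℕ, 1 ≤ i ∧ i ≤ n ∧ i - 1 = v ∧ (¬ xChain n i ≤ w ∧ xChain n i ≤ z) ∧
    ∀ j : ℕ, 1 ≤ j → j ≤ n → (¬ xChain n j ≤ w ∧ xChain n j ≤ z) → i ≤ j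

/-- The sequence of edge labels along a (saturated) chain, recorded as a list. -/
def chainLabels {α Λ : Type*} (lab : α → α → Λ) (c : List α) : List Λ :=
  List.zipWith lab c c.tail

/-- `c` is a saturated chain from `a` to `b` with respect to the cover relation `cov`. -/
def IsSatChainList {α : Type*} (cov : α → α → Prop) (a b : α) (c : List α) : Prop :=
  c.head? = some a ∧ c.getLast? = some b ∧ c.Chain' cov

/-- A chain is rising if its label sequence is strictly increasing. -/
def RisingChain {α Λ : Type*} [LT Λ] (lab : α → α → Λ) (c : List α) : Prop :=
  (chainLabels lab c).Chain' (· < ·)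

/-- `lab` is an EL-labeling with respect to the cover relation `cov` and order `le`:
every interval has a unique rising maximal chain, which is lexicographically least. -/
def IsELLabeling {α Λ : Type*} [PartialOrder Λ] (cov : α → α → Prop) (le : α → α → Prop)
    (lab : α → α → Λ) : Prop :=
  ∀ a b, le a b → ∃ c : List α, IsSatChainList cov a b c ∧ RisingChain lab c ∧
    (∀ c', IsSatChainList cov a b c' → RisingChain lab c' → c' = c) ∧
    (∀ c', IsSatChainList cov a b c' → c' ≠ c →
      List.Lex (· < ·) (chainLabels lab c) (chainLabels lab c'))


section PEAtomsAux

set_option linter.deprecated false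

private lemma pair_rel {n : ℕ} {i j : Fin n} (hij : i < j) {a b : Fin n}
    (h : (blockSetoid ({i, j} : Set (Fin n))).r a b) :
    a = b ∨ (a = i ∧ b = j) ∨ (a = j ∧ b = i) := by
  rcases h with rfl | ⟨ha, hb⟩
  · exact Or.inl rfl
  · simp only [Set.mem_insert_iff, Set.mem_singleton_iff] at ha hb
    rcases ha with rfl | rfl <;> rcases hb with rfl | rfl
    · exact Or.inl rfl
    · exact Or.inr (Or.inl ⟨rfl, rfl⟩)
    · exact Or.inr (Or.inr ⟨rfl, rfl⟩)
    · exact Or.inl rfl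

private lemma pair_rel_self {n : ℕ} (i j : Fin n) :
    (blockSetoid ({i, j} : Set (Fin n))).r i j :=
  Or.inr ⟨Set.mem_insert _ _, Set.mem_insert_iff.mpr (Or.inr rfl)⟩

private lemma PEmem_pair {n : ℕ} (hn : 3 ≤ n) {i j : Fin n} (hij : i < j)
    (h1 : ¬(i.val = 0 ∧ j.val = n - 2)) (h2 : ¬(i.val = n - 2 ∧ j.val = n - 1)) :
    PEmem (blockSetoid ({i, j} : Set (Fin n))) := by
  refine ⟨?_, ?_, ?_⟩
  · intro a b c d hab hbc hcd hac hbd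
    rcases pair_rel hij hac with rfl | ⟨rfl, rfl⟩ | ⟨rfl, rfl⟩
    · exact absurd (hab.trans hbc) (lt_irrefl _)
    · rcases pair_rel hij hbd with rfl | ⟨rfl, rfl⟩ | ⟨rfl, rfl⟩
      · exact absurd (hbc.trans hcd) (lt_irrefl _)
      · exact absurd hab (lt_irrefl _)
      · exact absurd (hab.trans (hbc.trans hcd)) (lt_irrefl _)
    · exact absurd (hij.trans (hab.trans hbc)) (lt_irrefl _)
  · rintro ⟨w, hw⟩
    have he2 : ((⟨n - 2, by omega⟩ : Fin n) ∈ {a : Fin n | a.val = n - 2 ∨ a.val = n - 1}) :=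
      Or.inl rfl
    have he1 : ((⟨n - 1, by omega⟩ : Fin n) ∈ {a : Fin n | a.val = n - 2 ∨ a.val = n - 1}) :=
      Or.inr rfl
    rw [hw] at he2 he1
    have hrel : (blockSetoid ({i, j} : Set (Fin n))).r ⟨n - 2, by omega⟩ ⟨n - 1, by omega⟩ :=
      Setoid.trans' _ (Setoid.symm' _ he2) he1
    rcases pair_rel hij hrel with h | ⟨ha, hb⟩ | ⟨ha, hb⟩
    · have := Fin.val_eq_val (⟨n - 2, by omega⟩ : Fin n) ⟨n - 1, by omega⟩ |>.mpr h
      simp only at this; omega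
    · exact h2 ⟨by rw [← ha], by rw [← hb]⟩
    · have hi : i.val = n - 1 := by rw [← hb]
      have hj : j.val = n - 2 := by rw [← ha]
      have := hij
      rw [Fin.lt_def, hi, hj] at this
      omega
  · rintro ⟨-, a, b, ha, hb, hrel⟩
    rcases pair_rel hij hrel with h | ⟨rfl, rfl⟩ | ⟨rfl, rfl⟩
    · rw [h] at ha; omega
    · exact h1 ⟨ha, hb⟩
    · rw [Fin.lt_def, hb, ha] at hij; omega

private lemma bot_lt_pair {n : ℕ} {i j : Fin n} (hij : i ≠ j) :
    (⊥ : Setoid (Fin n)) < blockSetoid ({i, j} : Set (Fin n)) := by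
  refine lt_of_le_of_ne bot_le fun h => ?_
  have := pair_rel_self i j
  rw [← h] at this
  exact hij this

private lemma exists_lt_pair {n : ℕ} {x : Setoid (Fin n)} (h : (⊥ : Setoid (Fin n)) < x) :
    ∃ a b : Fin n, a < b ∧ x.r a b := by
  by_contra hc
  push_neg at hc
  refine h.ne' (le_antisymm (fun a b hab => ?_) bot_le)
  show a = b
  rcases lt_trichotomy a b with h' | h' | h'
  · exact absurd hab (hc a b h')
  · exact h'
  · exact absurd (Setoid.symm' _ hab) (hc b a h')

end PEAtomsAux

/-- The atoms of `(PE_n, ≤_dref)` (elements covering the discrete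
partition, the bottom of `PE_n`) are exactly the partitions `a_{i,j}` with unique
non-singleton block `{i, j}` for `1 ≤ i < j ≤ n`, except `a_{1,n-1}` and `a_{n-1,n}`. -/
theorem PE_atoms (n : ℕ) (hn : 3 ≤ n) (x : Setoid (Fin n)) :
    (PEmem x ∧ ⊥ < x ∧ ∀ z, PEmem z → ⊥ < z → ¬ z < x) ↔
      (∃ i j : Fin n, i < j ∧ x = blockSetoid ({i, j} : Set (Fin n)) ∧
        ¬(i.val = 0 ∧ j.val = n - 2) ∧ ¬(i.val = n - 2 ∧ j.val = n - 1)) := by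
  set e0 : Fin n := ⟨0, by omega⟩ with he0
  set e2 : Fin n := ⟨n - 2, by omega⟩ with he2
  set e1 : Fin n := ⟨n - 1, by omega⟩ with he1
  constructor
  · rintro ⟨hPE, hbot, hmin⟩
    obtain ⟨a, b, halt, hrel⟩ := exists_lt_pair hbot
    by_cases hgood : ∃ a b : Fin n, a < b ∧ x.r a b ∧
        ¬(a.val = 0 ∧ b.val = n - 2) ∧ ¬(a.val = n - 2 ∧ b.val = n - 1)
    · obtain ⟨a, b, halt, hrel, hf1, hf2⟩ := hgood
      have hle : blockSetoid ({a, b} : Set (Fin n)) ≤ x := by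
        intro c d hcd
        rcases pair_rel halt hcd with rfl | ⟨rfl, rfl⟩ | ⟨rfl, rfl⟩
        · exact Setoid.refl' _ _
        · exact hrel
        · exact Setoid.symm' _ hrel
      have hnlt := hmin _ (PEmem_pair hn halt hf1 hf2) (bot_lt_pair halt.ne)
      have heq : blockSetoid ({a, b} : Set (Fin n)) = x := hle.lt_or_eq.resolve_left hnlt
      exact ⟨a, b, halt, heq.symm, hf1, hf2⟩
    · exfalso
      have hno : ∀ a b : Fin n, a < b → x.r a b →
          (a.val = 0 ∧ b.val = n - 2) ∨ (a.val = n - 2 ∧ b.val = n - 1) := by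
        intro a b h1 h2
        by_contra hc
        exact hgood ⟨a, b, h1, h2, fun h => hc (Or.inl h), fun h => hc (Or.inr h)⟩
      by_cases h02 : x.r e0 e2
      · by_cases h21 : x.r e2 e1
        · have h01 : x.r e0 e1 := Setoid.trans' _ h02 h21
          have hlt01 : e0 < e1 := by rw [Fin.lt_def]; simp [he0, he1]; omega
          rcases hno e0 e1 hlt01 h01 with ⟨h, h'⟩ | ⟨h, h'⟩ <;>
            simp only [he0, he1] at h h' <;> omega
        · refine hPE.2.2 ⟨⟨e1, ?_⟩, e0, e2, rfl, rfl, h02⟩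
          ext b
          simp only [Set.mem_setOf_eq]
          constructor
          · intro hb
            have : b = e1 := Fin.ext hb
            rw [this]
          · intro hb
            by_contra hbne
            have hblt : b < e1 := by
              rw [Fin.lt_def]
              simp only [he1]
              have := b.isLt
              omega
            rcases hno b e1 hblt (Setoid.symm' _ hb) with ⟨hb0, h1eq⟩ | ⟨hb2, -⟩
            · simp only [he1] at h1eq; omega
            · have : b = e2 := Fin.ext hb2
              rw [this] at hb
              exact h21 (Setoid.symm' _ hb)
      · have h21 : x.r e2 e1 := by
          rcases hno a b halt hrel with ⟨h1, h2⟩ | ⟨h1, h2⟩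
          · exfalso
            have ha : a = e0 := Fin.ext h1
            have hb : b = e2 := Fin.ext h2
            rw [ha, hb] at hrel
            exact h02 hrel
          · have ha : a = e2 := Fin.ext h1
            have hb : b = e1 := Fin.ext h2
            rw [ha, hb] at hrel
            exact hrel
        refine hPE.2.1 ⟨e2, ?_⟩
        ext b
        simp only [Set.mem_setOf_eq]
        constructor
        · rintro (hb | hb)
          · have : b = e2 := Fin.ext hb
            rw [this]
          · have : b = e1 := Fin.ext hb
            rw [this]
            exact h21
        · intro hb
          rcases lt_trichotomy b e2 with hlt | heq | hlt
          · exfalso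
            rcases hno b e2 hlt (Setoid.symm' _ hb) with ⟨hb0, -⟩ | ⟨hb2, -⟩
            · have : b = e0 := Fin.ext hb0
              rw [this] at hb
              exact h02 (Setoid.symm' _ hb)
            · rw [Fin.lt_def] at hlt
              simp only [he2] at hlt
              omega
          · left; rw [heq]
          · rcases hno e2 b hlt hb with ⟨h1, -⟩ | ⟨-, h2⟩
            · exfalso; simp only [he2] at h1; omega
            · right; exact h2
  · rintro ⟨i, j, hij, rfl, h1, h2⟩
    refine ⟨PEmem_pair hn hij h1 h2, bot_lt_pair hij.ne, ?_⟩
    intro z hz hbz hlt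
    obtain ⟨a, b, halt, hrel⟩ := exists_lt_pair hbz
    have hij' : z.r i j := by
      rcases pair_rel hij (hlt.le hrel) with rfl | ⟨rfl, rfl⟩ | ⟨rfl, rfl⟩
      · exact absurd halt (lt_irrefl _)
      · exact hrel
      · exact Setoid.symm' _ hrel
    refine hlt.ne (le_antisymm hlt.le fun c d hcd => ?_)
    rcases pair_rel hij hcd with rfl | ⟨rfl, rfl⟩ | ⟨rfl, rfl⟩
    · exact Setoid.refl' _ _
    · exact hij'
    · exact Setoid.symm' _ hij'
end

section
/- Let x ⋖ y in PE_n be a cover relation with parking label π(x,y) = n-1, i.e., the block B of x containing n-1 is merged with the singleton {n} to form y. Then the element y' obtained from x by merging the block A of x containing 1 with the singleton block {n} lies in PE_n, covers x, satisfies π(x,y') < n-1, and satisfies λ(x,y') = 1 < λ(x,y), where λ is the S_n EL-labeling of PE_n coming from the left-modular chain x_1 < ... < x_n. -/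
lemma xchain_rel {n i : ℕ} {a b : Fin n} :
    (xChain n i).r a b ↔
      a = b ∨ ((a.val + 1 < i ∨ a.val = n - 1) ∧ (b.val + 1 < i ∨ b.val = n - 1)) :=
  Iff.rfl

lemma nc_merge {n : ℕ} (x y' : Setoid (Fin n)) (z0 t : Fin n)
    (hz0 : ∀ a : Fin n, z0 ≤ a) (ht : ∀ a : Fin n, a ≤ t)
    (hnc : IsNoncrossing x)
    (hy' : ∀ a b, y'.r a b ↔ (x.r a b ∨
      ((x.r a z0 ∨ a = t) ∧ (x.r b z0 ∨ b = t)))) :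
    IsNoncrossing y' := by
  intro i j k l hij hjk hkl h1 h2
  rw [hy'] at h1 h2 ⊢
  have hil : i < t := lt_of_lt_of_le (hij.trans (hjk.trans hkl)) (ht l)
  have hjl : j < t := lt_of_lt_of_le (hjk.trans hkl) (ht l)
  have hkt : k < t := lt_of_lt_of_le hkl (ht l)
  rcases h1 with h1 | ⟨hi, hk⟩
  · rcases h2 with h2 | ⟨hj, hl⟩
    · exact Or.inl (hnc i j k l hij hjk hkl h1 h2)
    · have hj' : x.r j z0 := by
        rcases hj with hj | rfl
        · exact hj
        · exact absurd hjl (lt_irrefl _)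
      refine Or.inr ⟨?_, Or.inl hj'⟩
      rcases eq_or_lt_of_le (hz0 i) with hzi | hzi
      · exact Or.inl (by rw [← hzi])
      · exact Or.inl (x.symm (hnc z0 i j k hzi hij hjk (x.symm hj') h1))
  · have hi' : x.r i z0 := by
      rcases hi with hi | rfl
      · exact hi
      · exact absurd hil (lt_irrefl _)
    have hk' : x.r k z0 := by
      rcases hk with hk | rfl
      · exact hk
      · exact absurd hkt (lt_irrefl _)
    rcases h2 with h2 | ⟨hj, hl⟩
    · exact Or.inl (hnc i j k l hij hjk hkl (x.trans hi' (x.symm hk')) h2)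
    · have hj' : x.r j z0 := by
        rcases hj with hj | rfl
        · exact hj
        · exact absurd hjl (lt_irrefl _)
      exact Or.inl (x.trans hi' (x.symm hj'))

theorem PE_main_aux (n : ℕ) (hn : 3 ≤ n) (x y : Setoid (Fin n))
    (z0 z1 z2 : Fin n) (hv0 : z0.val = 0) (hv1 : z1.val = n - 1) (hv2 : z2.val = n - 2)
    (hcov : CovPE x y)
    (hpi : ParkingLabelIs x y z2)
    (hsing : IsBlock x {a : Fin n | a.val = n - 1})
    (hmerge : ∀ a b : Fin n, y.r a b ↔ (x.r a b ∨
      ((x.r a z2 ∨ a = z1) ∧ (x.r b z2 ∨ b = z1))))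
    (y' : Setoid (Fin n))
    (hy' : ∀ a b : Fin n, y'.r a b ↔ (x.r a b ∨
      ((x.r a z0 ∨ a = z1) ∧ (x.r b z0 ∨ b = z1)))) :
    PEmem y' ∧ CovPE x y' ∧
    (∀ p : Fin n, ParkingLabelIs x y' p → p.val < n - 2) ∧
    LabelIs n x y' 1 ∧ (∀ v, LabelIs n x y v → 1 < v) := by
  obtain ⟨hxPE, hyPE, hxlty, hmaxx⟩ := hcov
  have hxnc := hxPE.1
  have hz0le : ∀ a : Fin n, z0 ≤ a := fun a => by
    rw [Fin.le_def, hv0]; omega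
  have hz1ge : ∀ a : Fin n, a ≤ z1 := fun a => by
    have := a.isLt; rw [Fin.le_def, hv1]; omega
  have hne01 : z0 ≠ z1 := fun h => by
    have h2 := congrArg Fin.val h; rw [hv0, hv1] at h2; omega
  have hsingle : ∀ b : Fin n, x.r z1 b → b = z1 := by
    obtain ⟨a, ha⟩ := hsing
    have ha' : a.val = n - 1 := by
      have : a ∈ {b | x.r a b} := x.refl a
      rwa [← ha] at this
    have haz : a = z1 := Fin.ext (ha'.trans hv1.symm)
    intro b hb
    have hab : x.r a b := by rw [haz]; exact hb
    have : b ∈ {b | x.r a b} := hab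
    rw [← ha] at this
    exact Fin.ext (this.trans hv1.symm)
  have h0n2 : ¬ x.r z0 z2 := fun h => hxPE.2.2 ⟨hsing, z0, z2, hv0, hv2, h⟩
  have h0n1 : ¬ x.r z0 z1 := fun h => hne01 (hsingle z0 (x.symm h))
  have hin : ∀ a : Fin n, (x.r a z0 ∨ a = z1) → ∀ b : Fin n,
      (x.r b z0 ∨ b = z1) → y'.r a b :=
    fun a ha b hb => (hy' a b).mpr (Or.inr ⟨ha, hb⟩)
  have y'01 : y'.r z0 z1 := hin z0 (Or.inl (x.refl z0)) z1 (Or.inr rfl)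
  have hxley' : x ≤ y' := Setoid.le_def.mpr (fun h => (hy' _ _).mpr (Or.inl h))
  -- PEmem y'
  have hy'nc : IsNoncrossing y' := nc_merge x y' z0 z1 hz0le hz1ge hxnc hy'
  have hblk : ∀ B : Set (Fin n), IsBlock y' B → z1 ∈ B → z0 ∈ B := by
    rintro B ⟨c, rfl⟩ h1
    exact y'.trans h1 (y'.symm y'01)
  have hPE2 : ¬ IsBlock y' {a : Fin n | a.val = n - 2 ∨ a.val = n - 1} := by
    intro hB
    have h1 : z1 ∈ {a : Fin n | a.val = n - 2 ∨ a.val = n - 1} := Or.inr hv1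
    have h2 := hblk _ hB h1
    rw [Set.mem_setOf_eq, hv0] at h2
    omega
  have hPE3 : ¬ (IsBlock y' {a : Fin n | a.val = n - 1} ∧
      ∃ a b : Fin n, a.val = 0 ∧ b.val = n - 2 ∧ y'.r a b) := by
    rintro ⟨hB, -⟩
    have h1 : z1 ∈ {a : Fin n | a.val = n - 1} := hv1
    have h2 := hblk _ hB h1
    rw [Set.mem_setOf_eq, hv0] at h2
    omega
  have hy'PE : PEmem y' := ⟨hy'nc, hPE2, hPE3⟩
  -- CovPE x y'
  have hxlty' : x < y' := lt_of_le_of_ne hxley' (fun h => h0n1 (by rw [h]; exact y'01))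
  have hcov' : CovPE x y' := by
    refine ⟨hxPE, hy'PE, hxlty', ?_⟩
    intro z hz hxz hzy'
    obtain ⟨a, b, hzab, hxab⟩ : ∃ a b, z.r a b ∧ ¬ x.r a b := by
      by_contra hcon
      push_neg at hcon
      exact absurd (Setoid.le_def.mpr (fun {a b} h => hcon a b h)) hxz.not_ge
    have hy'ab : y'.r a b := Setoid.le_def.mp hzy'.le hzab
    rw [hy'] at hy'ab
    rcases hy'ab with h | ⟨ha, hb⟩
    · exact hxab h
    have hz01 : z.r z0 z1 := by
      rcases ha with ha | rfl
      · rcases hb with hb | rfl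
        · exact absurd (x.trans ha (x.symm hb)) hxab
        · exact z.trans (Setoid.le_def.mp hxz.le (x.symm ha)) hzab
      · rcases hb with hb | rfl
        · exact z.trans (Setoid.le_def.mp hxz.le (x.symm hb)) (z.symm hzab)
        · exact absurd (x.refl _) hxab
    have hy'lez : y' ≤ z := by
      rw [Setoid.le_def]
      intro c d hcd
      replace hcd : y'.r c d := hcd
      rw [hy'] at hcd
      rcases hcd with h | ⟨hc, hd⟩
      · exact Setoid.le_def.mp hxz.le h
      have hc' : z.r c z1 := by
        rcases hc with hc | rfl
        · exact z.trans (Setoid.le_def.mp hxz.le hc) hz01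
        · exact z.refl _
      have hd' : z.r d z1 := by
        rcases hd with hd | rfl
        · exact z.trans (Setoid.le_def.mp hxz.le hd) hz01
        · exact z.refl _
      exact z.trans hc' (z.symm hd')
    exact absurd hy'lez hzy'.not_ge
  -- Parking label
  have hparking : ∀ p : Fin n, ParkingLabelIs x y' p → p.val < n - 2 := by
    rintro p ⟨B₁, B₂, hB1, hB2, hne, hBu, ⟨a0, ha0, ha0lt⟩, hpB1, hpB2, hpmax⟩
    obtain ⟨c, hc⟩ := hBu
    by_cases hcin : x.r c z0 ∨ c = z1
    · have hAu : B₁ ∪ B₂ = {b : Fin n | x.r z0 b ∨ b = z1} := by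
        rw [hc]
        ext b
        simp only [Set.mem_setOf_eq]
        rw [hy']
        constructor
        · rintro (h | ⟨-, hb⟩)
          · rcases hcin with hc0 | rfl
            · exact Or.inl (x.trans (x.symm hc0) h)
            · exact Or.inr (hsingle b h)
          · rcases hb with hb | rfl
            · exact Or.inl (x.symm hb)
            · exact Or.inr rfl
        · rintro (h | rfl)
          · exact Or.inr ⟨hcin, Or.inl (x.symm h)⟩
          · exact Or.inr ⟨hcin, Or.inr rfl⟩
      have hpU : x.r z0 p ∨ p = z1 := by
        have hm : p ∈ B₁ ∪ B₂ := Set.mem_union_left B₂ hpB1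
        rw [hAu] at hm
        exact hm
      rcases hpU with hp | hp1
      · have hne1 : p ≠ z1 := fun h => h0n1 (h ▸ hp)
        have hne2 : p ≠ z2 := fun h => h0n2 (h ▸ hp)
        have e1 : p.val ≠ n - 1 := fun h => hne1 (Fin.ext (h.trans hv1.symm))
        have e2 : p.val ≠ n - 2 := fun h => hne2 (Fin.ext (h.trans hv2.symm))
        have := p.isLt
        omega
      · -- p = z1 : contradiction
        obtain ⟨a₁, ha₁⟩ := hB1
        have hxa₁ : x.r a₁ z1 := by
          have h' := hpB1
          rw [ha₁, hp1] at h'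
          exact h'
        have ha₁z : a₁ = z1 := hsingle a₁ (x.symm hxa₁)
        have ha0z : a0 = z1 := by
          have := ha0
          rw [ha₁, ha₁z] at this
          exact hsingle a0 this
        obtain ⟨a₂, ha₂⟩ := hB2
        have ha₂B : a₂ ∈ B₂ := by rw [ha₂]; exact x.refl a₂
        have := ha0lt a₂ ha₂B
        rw [ha0z] at this
        exact absurd this (not_lt.mpr (hz1ge a₂))
    · push_neg at hcin
      have hcx : ∀ b, y'.r c b → x.r c b := by
        intro b h
        rw [hy'] at h
        rcases h with h | ⟨hc', -⟩
        · exact h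
        · rcases hc' with h' | h'
          · exact absurd h' hcin.1
          · exact absurd h' hcin.2
      obtain ⟨a₁, ha₁⟩ := hB1
      have ha₁B : a₁ ∈ B₁ := by rw [ha₁]; exact x.refl a₁
      have hxca₁ : x.r c a₁ := by
        have hm : a₁ ∈ B₁ ∪ B₂ := Set.mem_union_left B₂ ha₁B
        rw [hc] at hm
        exact hcx a₁ hm
      obtain ⟨a₂, ha₂⟩ := hB2
      have ha₂B : a₂ ∈ B₂ := by rw [ha₂]; exact x.refl a₂
      have hxca₂ : x.r c a₂ := by
        have hm : a₂ ∈ B₁ ∪ B₂ := Set.mem_union_right B₁ ha₂B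
        rw [hc] at hm
        exact hcx a₂ hm
      refine absurd ?_ hne
      rw [ha₁, ha₂]
      ext d
      simp only [Set.mem_setOf_eq]
      exact ⟨fun h => x.trans (x.symm hxca₂) (x.trans hxca₁ h),
             fun h => x.trans (x.symm hxca₁) (x.trans hxca₂ h)⟩
  -- labels
  have hxchain1 : xChain n 1 ≤ x := by
    rw [Setoid.le_def]
    intro a b h
    rcases xchain_rel.mp h with rfl | ⟨ha, hb⟩
    · exact x.refl a
    · have ha' : a = z1 := by
        rcases ha with h' | h'
        · exact absurd h' (by omega)
        · exact Fin.ext (h'.trans hv1.symm)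
      have hb' : b = z1 := by
        rcases hb with h' | h'
        · exact absurd h' (by omega)
        · exact Fin.ext (h'.trans hv1.symm)
      rw [ha', hb']
  have hmem2 : ∀ d : Fin n, (d.val + 1 < 2 ∨ d.val = n - 1) → (x.r d z0 ∨ d = z1) := by
    intro d hd
    rcases hd with hd | hd
    · left
      have : d = z0 := Fin.ext (by rw [hv0]; omega)
      rw [this]
    · exact Or.inr (Fin.ext (hd.trans hv1.symm))
  have hxc2y' : xChain n 2 ≤ y' := by
    rw [Setoid.le_def]
    intro a b h
    rcases xchain_rel.mp h with rfl | ⟨ha, hb⟩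
    · exact y'.refl a
    · exact hin a (hmem2 a ha) b (hmem2 b hb)
  have hxc2rel : (xChain n 2).r z0 z1 :=
    xchain_rel.mpr (Or.inr ⟨Or.inl (by rw [hv0]; omega), Or.inr hv1⟩)
  have hxc2x : ¬ xChain n 2 ≤ x := fun h => h0n1 (Setoid.le_def.mp h hxc2rel)
  have hlab4 : LabelIs n x y' 1 := by
    refine ⟨2, by omega, by omega, rfl, ⟨hxc2x, hxc2y'⟩, ?_⟩
    intro j hj1 hjn hj
    by_contra hcon
    have hj1' : j = 1 := by omega
    rw [hj1'] at hj
    exact hj.1 hxchain1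
  have hy01 : ¬ y.r z0 z1 := by
    intro h
    rw [hmerge] at h
    rcases h with h | ⟨ha, -⟩
    · exact h0n1 h
    rcases ha with ha | ha
    · exact h0n2 ha
    · exact hne01 ha
  have hlab5 : ∀ v, LabelIs n x y v → 1 < v := by
    rintro v ⟨i, hi1, hin', hiv, ⟨hnle, hle⟩, -⟩
    by_contra hcon
    have : i = 1 ∨ i = 2 := by omega
    rcases this with rfl | rfl
    · exact hnle hxchain1
    · exact hy01 (Setoid.le_def.mp hle hxc2rel)
  exact ⟨hy'PE, hcov', hparking, hlab4, hlab5⟩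


/-- Let `x ⋖ y` in `PE_n` with parking label `π(x,y) = n-1`, i.e. `{n}` is
a singleton block of `x` and `y` is obtained by merging the block `B` of `x` containing
`n-1` with `{n}`.  Then the element `y'` obtained from `x` by merging the block `A`
containing `1` with the singleton `{n}` lies in `PE_n`, covers `x`, has parking label
`π(x,y') < n-1`, and satisfies `λ(x,y') = 1 < λ(x,y)` for the EL-labeling `λ` coming from
the left-modular chain. -/
theorem PE_removed_edge_label (n : ℕ) (hn : 3 ≤ n) (x y : Setoid (Fin n))
    (hcov : CovPE x y)
    (hpi : ParkingLabelIs x y ⟨n - 2, by omega⟩)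
    (hsing : IsBlock x {a : Fin n | a.val = n - 1})
    (hmerge : ∀ a b : Fin n, y.r a b ↔ (x.r a b ∨
      ((x.r a ⟨n - 2, by omega⟩ ∨ a = ⟨n - 1, by omega⟩) ∧
       (x.r b ⟨n - 2, by omega⟩ ∨ b = ⟨n - 1, by omega⟩))))
    (y' : Setoid (Fin n))
    (hy' : ∀ a b : Fin n, y'.r a b ↔ (x.r a b ∨
      ((x.r a ⟨0, by omega⟩ ∨ a = ⟨n - 1, by omega⟩) ∧
       (x.r b ⟨0, by omega⟩ ∨ b = ⟨n - 1, by omega⟩)))) :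
    PEmem y' ∧ CovPE x y' ∧
    (∀ p : Fin n, ParkingLabelIs x y' p → p.val < n - 2) ∧
    LabelIs n x y' 1 ∧ (∀ v, LabelIs n x y v → 1 < v) :=
  PE_main_aux n hn x y ⟨0, by omega⟩ ⟨n - 1, by omega⟩ ⟨n - 2, by omega⟩ rfl rfl rfl
    hcov hpi hsing hmerge y' hy'
end
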